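/- Let ν be a weakly mixing shift-invariant measure and μ = ∫ μ_ω dν(ω) the mixture over an equivariant kernel satisfying the fiberwise factorization property (for finitely-coordinate-determined f, g and large k, ∫ f·(g∘S^k) dμ_ω = ∫ f dμ_ω · ∫ g∘S^k dμ_ω). Then μ is weakly mixing: (1/n) Σ_{k<n} |∫ f·(g∘S^k) dμ − ∫f dμ ∫g dμ| → 0 for all bounded measurable f, g. -/

import Mathlib

open MeasureTheory Filter

set_option synthInstance.maxHeartbeats 1000000
set_option maxHeartbeats 2000000

lemma mwm_integrable_of_bdd {β : Type*} [MeasurableSpace β] {μ : Measure β} [IsFiniteMeasure μ]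
    {h : β → ℝ} (hm : Measurable h) {C : ℝ} (hb : ∀ z, |h z| ≤ C) : Integrable h μ :=
  Integrable.mono' (integrable_const C) hm.aestronglyMeasurable
    (Filter.Eventually.of_forall (fun x => by simpa [Real.norm_eq_abs] using hb x))

lemma mwm_abs_integral_le {β : Type*} [MeasurableSpace β] {μ : Measure β} [IsProbabilityMeasure μ]
    {h : β → ℝ} {C : ℝ} (hb : ∀ z, |h z| ≤ C) : |∫ z, h z ∂μ| ≤ C := by
  have := norm_integral_le_of_norm_le_const (μ := μ) (f := h) (C := C)
    (Filter.Eventually.of_forall (fun x => by simpa [Real.norm_eq_abs] using hb x))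
  simpa [Real.norm_eq_abs, measure_univ] using this

lemma mwm_abs_int_le_int_abs {β : Type*} [MeasurableSpace β] (μ : Measure β) (h : β → ℝ) :
    |∫ z, h z ∂μ| ≤ ∫ z, |h z| ∂μ := by
  simpa [Real.norm_eq_abs] using norm_integral_le_integral_norm (μ := μ) h

lemma mwm_measurable_integral_kernel {α β : Type*} [MeasurableSpace α] [MeasurableSpace β]
    (κ : α → Measure β) (hκ : Measurable κ) (hprob : ∀ a, IsProbabilityMeasure (κ a))
    {h : β → ℝ} (hm : Measurable h) :
    Measurable fun a => ∫ z, h z ∂(κ a) := by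
  set K : ProbabilityTheory.Kernel α β := ⟨κ, hκ⟩ with hK
  haveI : ProbabilityTheory.IsMarkovKernel K := ⟨hprob⟩
  have : StronglyMeasurable fun a => ∫ z, (fun (_ : α) z => h z) a z ∂(K a) :=
    MeasureTheory.StronglyMeasurable.integral_kernel_prod_right
      ((hm.comp measurable_snd).stronglyMeasurable)
  exact this.measurable

lemma mwm_integral_bind_of_bdd {α β : Type*} [MeasurableSpace α] [MeasurableSpace β]
    (ν : Measure α) [IsProbabilityMeasure ν] (κ : α → Measure β) (hκ : Measurable κ)
    (hprob : ∀ a, IsProbabilityMeasure (κ a)) {h : β → ℝ} (hm : Measurable h) {C : ℝ}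
    (hb : ∀ z, |h z| ≤ C) :
    ∫ z, h z ∂(ν.bind κ) = ∫ a, ∫ z, h z ∂(κ a) ∂ν := by
  set K : ProbabilityTheory.Kernel α β := ⟨κ, hκ⟩ with hK
  haveI : ProbabilityTheory.IsMarkovKernel K := ⟨hprob⟩
  have hbind : ν.bind κ = (ν.compProd K).map Prod.snd := by
    ext s hs
    rw [Measure.map_apply measurable_snd hs,
      Measure.compProd_apply (measurable_snd hs),
      Measure.bind_apply hs hκ.aemeasurable]
    rfl
  haveI : IsFiniteMeasure (ν.compProd K) := by
    constructor
    rw [Measure.compProd_apply MeasurableSet.univ]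
    simp
  rw [hbind, integral_map measurable_snd.aemeasurable hm.aestronglyMeasurable,
    Measure.integral_compProd (f := fun x : α × β => h x.2)
      (mwm_integrable_of_bdd (μ := ν.compProd K)
        (Measurable.comp hm measurable_snd : Measurable fun x : α × β => h x.2)
        (C := |C|) (fun z => le_trans (hb _) (le_abs_self _)))]
  rfl

lemma mwm_isProb_bind {α β : Type*} [MeasurableSpace α] [MeasurableSpace β]
    (ν : Measure α) [IsProbabilityMeasure ν] (κ : α → Measure β) (hκ : Measurable κ)
    (hprob : ∀ a, IsProbabilityMeasure (κ a)) : IsProbabilityMeasure (ν.bind κ) := by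
  constructor
  rw [Measure.bind_apply MeasurableSet.univ hκ.aemeasurable]
  simp [measure_univ]

noncomputable def mwmRes (d N : ℕ) :
    (ℤ → (Fin d → Set.Ioo (0:ℝ) 1)) → ({i : ℤ // |i| ≤ (N : ℤ)} → (Fin d → Set.Ioo (0:ℝ) 1)) :=
  fun x j => x j.1

lemma mwmRes_measurable (d N : ℕ) : Measurable (mwmRes d N) :=
  measurable_pi_lambda _ (fun j => measurable_pi_apply j.1)

noncomputable def mwmF (d : ℕ) :
    Filtration ℕ (inferInstance : MeasurableSpace (ℤ → (Fin d → Set.Ioo (0:ℝ) 1))) where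
  seq N := MeasurableSpace.comap (mwmRes d N) inferInstance
  mono' := by
    intro N M hNM
    have hfac : mwmRes d N =
        (fun v (j : {i : ℤ // |i| ≤ (N : ℤ)}) =>
          v ⟨j.1, le_trans j.2 (by exact_mod_cast hNM)⟩) ∘ mwmRes d M := rfl
    show MeasurableSpace.comap (mwmRes d N) inferInstance ≤
      MeasurableSpace.comap (mwmRes d M) inferInstance
    rw [hfac, ← MeasurableSpace.comap_comp]
    exact MeasurableSpace.comap_mono
      (measurable_iff_comap_le.1 (measurable_pi_lambda _ (fun j => measurable_pi_apply _)))
  le' N := measurable_iff_comap_le.1 (mwmRes_measurable d N)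

lemma mwmF_iSup (d : ℕ) :
    (⨆ N, (mwmF d) N) = (inferInstance : MeasurableSpace (ℤ → (Fin d → Set.Ioo (0:ℝ) 1))) := by
  apply le_antisymm
  · exact iSup_le fun N => (mwmF d).le N
  · have h1 : ∀ i : ℤ,
        MeasurableSpace.comap (fun x : (ℤ → (Fin d → Set.Ioo (0:ℝ) 1)) => x i) inferInstance ≤
          ⨆ N, (mwmF d) N := by
      intro i
      have hi : |i| ≤ ((i.natAbs : ℕ) : ℤ) := by
        rw [Int.abs_eq_natAbs]
      have hfac : (fun x : (ℤ → (Fin d → Set.Ioo (0:ℝ) 1)) => x i) =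
          (fun v : {j : ℤ // |j| ≤ ((i.natAbs : ℕ) : ℤ)} → (Fin d → Set.Ioo (0:ℝ) 1) =>
            v ⟨i, hi⟩) ∘ mwmRes d i.natAbs := rfl
      rw [hfac, ← MeasurableSpace.comap_comp]
      refine le_trans ?_ (le_iSup (fun N => (mwmF d) N) i.natAbs)
      exact MeasurableSpace.comap_mono
        (measurable_iff_comap_le.1 (measurable_pi_apply _))
    exact iSup_le h1

lemma mwm_trunc_le {a b C : ℝ} (hb : |b| ≤ C) : |max (-C) (min C a) - b| ≤ |a - b| := by
  rcases abs_le.1 hb with ⟨hb1, hb2⟩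
  rcases le_total a (-C) with h2 | h2
  · rw [min_eq_right (by linarith), max_eq_left h2, abs_of_nonpos (by linarith),
      abs_of_nonpos (by linarith)]
    linarith
  · rcases le_total a C with h1 | h1
    · rw [min_eq_right h1, max_eq_right h2]
    · rw [min_eq_left h1, max_eq_right (by linarith), abs_of_nonneg (by linarith),
        abs_of_nonneg (by linarith)]
      linarith

lemma mwm_exists_findet_approx (d : ℕ) (μ : Measure (ℤ → (Fin d → Set.Ioo (0:ℝ) 1)))
    [IsProbabilityMeasure μ] (f : (ℤ → (Fin d → Set.Ioo (0:ℝ) 1)) → ℝ) (hf : Measurable f)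
    (C : ℝ) (hC : ∀ z, |f z| ≤ C) (ε : ℝ) (hε : 0 < ε) :
    ∃ f' : (ℤ → (Fin d → Set.Ioo (0:ℝ) 1)) → ℝ, Measurable f' ∧ (∀ z, |f' z| ≤ C) ∧
      (∃ N : ℕ, ∀ x y, (∀ i : ℤ, |i| ≤ (N : ℤ) → x i = y i) → f' x = f' y) ∧
      ∫ z, |f z - f' z| ∂μ < ε := by
  haveI : IsFiniteMeasure μ := MeasureTheory.IsZeroOrProbabilityMeasure.toIsFiniteMeasure μ
  have hint : Integrable f μ := mwm_integrable_of_bdd hf hC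
  have hsm : StronglyMeasurable[⨆ N, (mwmF d) N] f := by
    rw [mwmF_iSup]
    exact hf.stronglyMeasurable
  have hlevy := hint.tendsto_eLpNorm_condExp hsm
  obtain ⟨N, hN⟩ :=
    (hlevy.eventually_lt_const (ENNReal.ofReal_pos.2 hε)).exists
  set h := μ[f | (mwmF d) N] with hh
  have hhm : Measurable h :=
    (stronglyMeasurable_condExp.mono ((mwmF d).le N)).measurable
  have hCnn : 0 ≤ C := le_trans (abs_nonneg _) (hC (fun _ _ => ⟨1/2, by norm_num⟩))
  refine ⟨fun z => max (-C) (min C (h z)), ?_, ?_, ?_, ?_⟩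
  · exact measurable_const.max (measurable_const.min hhm)
  · intro z
    exact abs_le.2 ⟨le_max_left _ _, max_le (by linarith) (min_le_left _ _)⟩
  · refine ⟨N, fun x y hxy => ?_⟩
    have hres : mwmRes d N x = mwmRes d N y := funext fun j => hxy j.1 j.2
    have hm' : Measurable[(mwmF d) N] h := stronglyMeasurable_condExp.measurable
    obtain ⟨B, hB, hBeq⟩ :=
      MeasurableSpace.measurableSet_comap.1 (hm' (measurableSet_singleton (h x)))
    have hxB : mwmRes d N x ∈ B := by
      have : x ∈ mwmRes d N ⁻¹' B := by rw [hBeq]; exact rfl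
      exact this
    have hyB : y ∈ mwmRes d N ⁻¹' B := by
      simp only [Set.mem_preimage, ← hres]
      exact hxB
    rw [hBeq] at hyB
    have : h y = h x := hyB
    simp [this]
  · have hptw : ∀ z, |f z - max (-C) (min C (h z))| ≤ |h z - f z| := by
      intro z
      rw [abs_sub_comm]
      exact mwm_trunc_le (hC z)
    have hint2 : Integrable (fun z => |h z - f z|) μ :=
      ((integrable_condExp.sub hint).abs)
    have hle : ∫ z, |f z - max (-C) (min C (h z))| ∂μ ≤ ∫ z, |h z - f z| ∂μ := by
      refine integral_mono ?_ hint2 hptw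
      exact (hint.sub (mwm_integrable_of_bdd
        (measurable_const.max (measurable_const.min hhm))
        (C := C) (fun z => abs_le.2 ⟨le_max_left _ _, max_le (by linarith) (min_le_left _ _)⟩))).abs
    refine lt_of_le_of_lt hle ?_
    have hintc : Integrable (h - f) μ :=
      Integrable.sub (integrable_condExp (f := f) (m := (mwmF d) N)) hint
    have heq : ∫ z, |h z - f z| ∂μ = (eLpNorm (h - f) 1 μ).toReal := by
      rw [eLpNorm_one_eq_lintegral_enorm]
      have h3 := integral_norm_eq_lintegral_enorm hintc.aestronglyMeasurable
      simpa [Real.norm_eq_abs] using h3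
    rw [heq]
    exact ENNReal.toReal_lt_of_lt_ofReal hN

/-- If `ν` is weakly mixing and the equivariant kernel satisfies the fiberwise
factorization property for functions depending on finitely many coordinates, then the
mixture measure `μ = ν.bind κ` is weakly mixing:
`(1/n) Σ_{k<n} |∫ f·(g∘S^k) dμ − ∫f dμ ∫g dμ| → 0` for all bounded measurable `f, g`. -/
theorem mixture_weakly_mixing
    (d : ℕ)
    (ν : Measure (ℤ → (Fin d → ℝ))) [IsProbabilityMeasure ν]
    (T : (ℤ → (Fin d → ℝ)) → (ℤ → (Fin d → ℝ))) (hT : ∀ x n, T x n = x (n + 1))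
    (S : (ℤ → (Fin d → Set.Ioo (0:ℝ) 1)) → (ℤ → (Fin d → Set.Ioo (0:ℝ) 1)))
    (hS : ∀ y n, S y n = y (n + 1)) (hSmeas : Measurable S)
    (hinv : ν.map T = ν)
    (hwm : ∀ (F G : (ℤ → (Fin d → ℝ)) → ℝ), Measurable F → Measurable G →
      (∃ C : ℝ, ∀ x, |F x| ≤ C) → (∃ C : ℝ, ∀ x, |G x| ≤ C) →
      Tendsto (fun n : ℕ => (1 / (n : ℝ)) * ∑ k ∈ Finset.range n,
          |∫ x, F x * G (T^[k] x) ∂ν - (∫ x, F x ∂ν) * ∫ x, G x ∂ν|)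
        atTop (nhds 0))
    (κ : (ℤ → (Fin d → ℝ)) → Measure (ℤ → (Fin d → Set.Ioo (0:ℝ) 1)))
    (hprob : ∀ ω, IsProbabilityMeasure (κ ω))
    (hmeas : ∀ s : Set (ℤ → (Fin d → Set.Ioo (0:ℝ) 1)), MeasurableSet s →
      Measurable (fun ω => κ ω s))
    (hequiv : ∀ ω (h : (ℤ → (Fin d → Set.Ioo (0:ℝ) 1)) → ℝ), Measurable h →
      (∃ C : ℝ, ∀ z, |h z| ≤ C) →
      ∫ z, h z ∂(κ ω) = ∫ z, h (S z) ∂(κ (T ω)))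
    (hfact : ∀ (f g : (ℤ → (Fin d → Set.Ioo (0:ℝ) 1)) → ℝ),
      Measurable f → Measurable g →
      (∃ C : ℝ, ∀ z, |f z| ≤ C) → (∃ C : ℝ, ∀ z, |g z| ≤ C) →
      (∃ N : ℕ, ∀ x y, (∀ i : ℤ, |i| ≤ (N : ℤ) → x i = y i) → f x = f y) →
      (∃ N : ℕ, ∀ x y, (∀ i : ℤ, |i| ≤ (N : ℤ) → x i = y i) → g x = g y) →
      ∃ K : ℕ, ∀ k ≥ K, ∀ ω,
        ∫ z, f z * g (S^[k] z) ∂(κ ω) =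
          (∫ z, f z ∂(κ ω)) * (∫ z, g (S^[k] z) ∂(κ ω))) :
    ∀ (f g : (ℤ → (Fin d → Set.Ioo (0:ℝ) 1)) → ℝ),
      Measurable f → Measurable g →
      (∃ C : ℝ, ∀ z, |f z| ≤ C) → (∃ C : ℝ, ∀ z, |g z| ≤ C) →
      Tendsto (fun n : ℕ => (1 / (n : ℝ)) * ∑ k ∈ Finset.range n,
          |∫ z, f z * g (S^[k] z) ∂(ν.bind κ) -
            (∫ z, f z ∂(ν.bind κ)) * ∫ z, g z ∂(ν.bind κ)|)
        atTop (nhds 0) := by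
  intro f g hf hg hbf hbg
  obtain ⟨Cf, hCf⟩ := hbf
  obtain ⟨Cg, hCg⟩ := hbg
  classical
  have hTmeas : Measurable T := by
    have hTe : T = fun x n => x (n + 1) := by funext x n; exact hT x n
    rw [hTe]; exact measurable_pi_lambda _ (fun n => measurable_pi_apply _)
  have hκmeas : Measurable κ := Measure.measurable_of_measurable_coe κ hmeas
  haveI hμprob : IsProbabilityMeasure (ν.bind κ) := mwm_isProb_bind ν κ hκmeas hprob
  set μ := ν.bind κ with hμdef
  haveI : IsFiniteMeasure μ := MeasureTheory.IsZeroOrProbabilityMeasure.toIsFiniteMeasure μ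
  -- invariance of ν under iterates of T
  have hmapk : ∀ k : ℕ, ν.map (T^[k]) = ν := by
    intro k; induction k with
    | zero => simp
    | succ k ih =>
      rw [Function.iterate_succ', ← Measure.map_map hTmeas (hTmeas.iterate k), ih, hinv]
  have hνinv : ∀ (φ : (ℤ → (Fin d → ℝ)) → ℝ), Measurable φ → ∀ k : ℕ,
      ∫ ω, φ (T^[k] ω) ∂ν = ∫ ω, φ ω ∂ν := by
    intro φ hφ k
    conv_rhs => rw [← hmapk k]
    rw [integral_map (hTmeas.iterate k).aemeasurable hφ.aestronglyMeasurable]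
  -- iterated equivariance
  have hequivk : ∀ (k : ℕ) (h : (ℤ → (Fin d → Set.Ioo (0:ℝ) 1)) → ℝ), Measurable h →
      (∃ C : ℝ, ∀ z, |h z| ≤ C) → ∀ ω,
      ∫ z, h z ∂(κ ω) = ∫ z, h (S^[k] z) ∂(κ (T^[k] ω)) := by
    intro k
    induction k with
    | zero => intro h _ _ ω; simp
    | succ k ih =>
      intro h hm hb ω
      obtain ⟨C, hC⟩ := hb
      have step : ∫ z, h z ∂(κ ω) = ∫ z, h (S z) ∂(κ (T ω)) := hequiv ω h hm ⟨C, hC⟩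
      rw [step, ih (fun z => h (S z)) (hm.comp hSmeas) ⟨C, fun z => hC _⟩ (T ω)]
      simp only [← Function.iterate_succ_apply' S, ← Function.iterate_succ_apply T]
  -- S-invariance of μ
  have hμinv : ∀ (h : (ℤ → (Fin d → Set.Ioo (0:ℝ) 1)) → ℝ), Measurable h → ∀ C : ℝ,
      (∀ z, |h z| ≤ C) → ∀ k : ℕ, ∫ z, h (S^[k] z) ∂μ = ∫ z, h z ∂μ := by
    intro h hm C hC k
    have hmk : Measurable fun z => h (S^[k] z) := hm.comp (hSmeas.iterate k)
    rw [hμdef, mwm_integral_bind_of_bdd ν κ hκmeas hprob hmk (C := C) (fun z => hC _),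
        mwm_integral_bind_of_bdd ν κ hκmeas hprob hm (C := C) hC]
    calc ∫ ω, ∫ z, h (S^[k] z) ∂(κ ω) ∂ν
        = ∫ ω, ∫ z, h (S^[k] z) ∂(κ (T^[k] ω)) ∂ν :=
          (hνinv (fun ω => ∫ z, h (S^[k] z) ∂(κ ω))
            (mwm_measurable_integral_kernel κ hκmeas hprob hmk) k).symm
      _ = ∫ ω, ∫ z, h z ∂(κ ω) ∂ν :=
          integral_congr_ae (Filter.Eventually.of_forall fun ω =>
            (hequivk k h hm ⟨C, hC⟩ ω).symm)
  -- the key case: finitely determined functions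
  have key : ∀ (f g : (ℤ → (Fin d → Set.Ioo (0:ℝ) 1)) → ℝ), Measurable f → Measurable g →
      ∀ Cf : ℝ, (∀ z, |f z| ≤ Cf) → ∀ Cg : ℝ, (∀ z, |g z| ≤ Cg) →
      (∃ N : ℕ, ∀ x y, (∀ i : ℤ, |i| ≤ (N : ℤ) → x i = y i) → f x = f y) →
      (∃ N : ℕ, ∀ x y, (∀ i : ℤ, |i| ≤ (N : ℤ) → x i = y i) → g x = g y) →
      Tendsto (fun n : ℕ => (1 / (n : ℝ)) * ∑ k ∈ Finset.range n,
          |∫ z, f z * g (S^[k] z) ∂μ - (∫ z, f z ∂μ) * ∫ z, g z ∂μ|) atTop (nhds 0) := by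
    intro f g hf hg Cf hCf Cg hCg hfd hgd
    obtain ⟨K0, hK0⟩ := hfact f g hf hg ⟨Cf, hCf⟩ ⟨Cg, hCg⟩ hfd hgd
    set F := fun ω => ∫ z, f z ∂(κ ω) with hFdef
    set G := fun ω => ∫ z, g z ∂(κ ω) with hGdef
    have hFm : Measurable F := mwm_measurable_integral_kernel κ hκmeas hprob hf
    have hGm : Measurable G := mwm_measurable_integral_kernel κ hκmeas hprob hg
    have hFb : ∀ ω, |F ω| ≤ Cf := fun ω => by
      haveI := hprob ω; exact mwm_abs_integral_le hCf
    have hGb : ∀ ω, |G ω| ≤ Cg := fun ω => by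
      haveI := hprob ω; exact mwm_abs_integral_le hCg
    have hIf : ∫ z, f z ∂μ = ∫ ω, F ω ∂ν :=
      mwm_integral_bind_of_bdd ν κ hκmeas hprob hf (C := Cf) hCf
    have hIg : ∫ z, g z ∂μ = ∫ ω, G ω ∂ν :=
      mwm_integral_bind_of_bdd ν κ hκmeas hprob hg (C := Cg) hCg
    set a : ℕ → ℝ := fun k =>
      |∫ z, f z * g (S^[k] z) ∂μ - (∫ z, f z ∂μ) * ∫ z, g z ∂μ| with hadef
    set b : ℕ → ℝ := fun k =>
      |∫ ω, G ω * F (T^[k] ω) ∂ν - (∫ ω, G ω ∂ν) * ∫ ω, F ω ∂ν| with hbdef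
    have hab : ∀ k, K0 ≤ k → a k = b k := by
      intro k hk
      have hm1 : Measurable fun z => f z * g (S^[k] z) :=
        hf.mul (hg.comp (hSmeas.iterate k))
      have hbd1 : ∀ z, |f z * g (S^[k] z)| ≤ |Cf| * |Cg| := fun z => by
        rw [abs_mul]
        exact mul_le_mul (le_trans (hCf z) (le_abs_self _))
          (le_trans (hCg _) (le_abs_self _)) (abs_nonneg _) (abs_nonneg _)
      have hHkm : Measurable fun ω => ∫ z, g (S^[k] z) ∂(κ ω) :=
        mwm_measurable_integral_kernel κ hκmeas hprob (hg.comp (hSmeas.iterate k))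
      have h1 : ∫ z, f z * g (S^[k] z) ∂μ = ∫ ω, G ω * F (T^[k] ω) ∂ν := by
        rw [hμdef, mwm_integral_bind_of_bdd ν κ hκmeas hprob hm1 hbd1]
        calc ∫ ω, ∫ z, f z * g (S^[k] z) ∂(κ ω) ∂ν
            = ∫ ω, F ω * ∫ z, g (S^[k] z) ∂(κ ω) ∂ν :=
              integral_congr_ae (Filter.Eventually.of_forall fun ω => hK0 k hk ω)
          _ = ∫ ω, F (T^[k] ω) * ∫ z, g (S^[k] z) ∂(κ (T^[k] ω)) ∂ν :=
              (hνinv (fun ω => F ω * ∫ z, g (S^[k] z) ∂(κ ω)) (hFm.mul hHkm) k).symm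
          _ = ∫ ω, G ω * F (T^[k] ω) ∂ν := by
              refine integral_congr_ae (Filter.Eventually.of_forall fun ω => ?_)
              have h5 := hequivk k g hg ⟨Cg, hCg⟩ ω
              simp only [hGdef, hFdef]
              rw [← h5]
              ring
      have h2 : (∫ z, f z ∂μ) * ∫ z, g z ∂μ = (∫ ω, G ω ∂ν) * ∫ ω, F ω ∂ν := by
        rw [hIf, hIg, mul_comm]
      simp only [hadef, hbdef, h1, h2]
    have hwmb : Tendsto (fun n : ℕ => (1 / (n : ℝ)) * ∑ k ∈ Finset.range n, b k)
        atTop (nhds 0) := hwm G F hGm hFm ⟨Cg, hGb⟩ ⟨Cf, hFb⟩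
    set c : ℝ := ∑ k ∈ Finset.range K0, (a k - b k) with hcdef
    have hsum : ∀ n, K0 ≤ n →
        ∑ k ∈ Finset.range n, a k = (∑ k ∈ Finset.range n, b k) + c := by
      intro n hn
      have hdiff : ∑ k ∈ Finset.range n, (a k - b k) = c := by
        rw [hcdef]
        refine (Finset.sum_subset (Finset.range_subset_range.2 hn) ?_).symm
        intro k _ hk2
        have hkK : K0 ≤ k := le_of_not_gt (fun hlt => hk2 (Finset.mem_range.2 hlt))
        rw [hab k hkK]; ring
      calc ∑ k ∈ Finset.range n, a k
          = ∑ k ∈ Finset.range n, (b k + (a k - b k)) := by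
            refine Finset.sum_congr rfl ?_; intros; ring
        _ = (∑ k ∈ Finset.range n, b k) + ∑ k ∈ Finset.range n, (a k - b k) :=
            Finset.sum_add_distrib
        _ = _ := by rw [hdiff]
    have h0 : Tendsto (fun n : ℕ => (1 / (n : ℝ)) * c) atTop (nhds 0) := by
      simpa using tendsto_one_div_atTop_nhds_zero_nat.mul_const c
    have htend : Tendsto (fun n : ℕ =>
        (1 / (n : ℝ)) * ∑ k ∈ Finset.range n, b k + (1 / (n : ℝ)) * c) atTop (nhds 0) := by
      simpa using hwmb.add h0
    refine htend.congr' ?_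
    filter_upwards [eventually_ge_atTop K0] with n hn
    rw [hsum n hn]; ring
  -- general case via approximation
  rw [NormedAddCommGroup.tendsto_nhds_zero]
  intro ε hε
  set C : ℝ := max Cf Cg with hCdef
  have hCf' : ∀ z, |f z| ≤ C := fun z => (hCf z).trans (le_max_left _ _)
  have hCg' : ∀ z, |g z| ≤ C := fun z => (hCg z).trans (le_max_right _ _)
  have hC0 : 0 ≤ C := le_trans (abs_nonneg _) (hCf' (fun _ _ => ⟨1/2, by norm_num⟩))
  set δ : ℝ := ε / (2 * (4 * C + 1)) with hδdef
  have hδpos : 0 < δ := by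
    rw [hδdef]; positivity
  obtain ⟨f', hf'm, hf'b, hf'fd, hf'int⟩ :=
    mwm_exists_findet_approx d μ f hf C hCf' δ hδpos
  obtain ⟨g', hg'm, hg'b, hg'fd, hg'int⟩ :=
    mwm_exists_findet_approx d μ g hg C hCg' δ hδpos
  have hkey := key f' g' hf'm hg'm C hf'b C hg'b hf'fd hg'fd
  set δ1 : ℝ := ∫ z, |f z - f' z| ∂μ with hδ1def
  set δ2 : ℝ := ∫ z, |g z - g' z| ∂μ with hδ2def
  have hδ1nn : 0 ≤ δ1 := integral_nonneg (fun z => abs_nonneg _)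
  have hδ2nn : 0 ≤ δ2 := integral_nonneg (fun z => abs_nonneg _)
  -- pointwise comparison of the averaged terms
  have hcomp : ∀ k : ℕ,
      |∫ z, f z * g (S^[k] z) ∂μ - (∫ z, f z ∂μ) * ∫ z, g z ∂μ| ≤
        |∫ z, f' z * g' (S^[k] z) ∂μ - (∫ z, f' z ∂μ) * ∫ z, g' z ∂μ| +
          2 * C * (δ1 + δ2) := by
    intro k
    have hSk : Measurable (S^[k]) := hSmeas.iterate k
    have int1 : Integrable (fun z => f z * g (S^[k] z)) μ :=
      mwm_integrable_of_bdd (hf.mul (hg.comp hSk)) (C := C * C) (fun z => by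
        rw [abs_mul]
        exact mul_le_mul (hCf' z) (hCg' _) (abs_nonneg _) hC0)
    have int2 : Integrable (fun z => f' z * g' (S^[k] z)) μ :=
      mwm_integrable_of_bdd (hf'm.mul (hg'm.comp hSk)) (C := C * C) (fun z => by
        rw [abs_mul]
        exact mul_le_mul (hf'b z) (hg'b _) (abs_nonneg _) hC0)
    have intf : Integrable f μ := mwm_integrable_of_bdd hf hCf'
    have intf' : Integrable f' μ := mwm_integrable_of_bdd hf'm hf'b
    have intg : Integrable g μ := mwm_integrable_of_bdd hg hCg'
    have intg' : Integrable g' μ := mwm_integrable_of_bdd hg'm hg'b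
    have intdf : Integrable (fun z => |f z - f' z|) μ := (intf.sub intf').abs
    have intdgk : Integrable (fun z => |g (S^[k] z) - g' (S^[k] z)|) μ :=
      mwm_integrable_of_bdd ((hg.comp hSk).sub (hg'm.comp hSk)).abs (C := 2 * C)
        (fun z => by
          rw [abs_abs]
          calc |g (S^[k] z) - g' (S^[k] z)| ≤ |g (S^[k] z)| + |g' (S^[k] z)| := abs_sub _ _
            _ ≤ C + C := add_le_add (hCg' _) (hg'b _)
            _ = 2 * C := by ring)
    have hδ2k : ∫ z, |g (S^[k] z) - g' (S^[k] z)| ∂μ = δ2 := by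
      rw [hδ2def]
      exact hμinv (fun z => |g z - g' z|) ((hg.sub hg'm).abs) (2 * C)
        (fun z => by
          rw [abs_abs]
          calc |g z - g' z| ≤ |g z| + |g' z| := abs_sub _ _
            _ ≤ C + C := add_le_add (hCg' _) (hg'b _)
            _ = 2 * C := by ring) k
    have hA : |(∫ z, f z * g (S^[k] z) ∂μ) - ∫ z, f' z * g' (S^[k] z) ∂μ| ≤
        C * δ1 + C * δ2 := by
      rw [← integral_sub int1 int2]
      refine (mwm_abs_int_le_int_abs μ _).trans ?_
      have hpt : ∀ z, |f z * g (S^[k] z) - f' z * g' (S^[k] z)| ≤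
          C * |f z - f' z| + C * |g (S^[k] z) - g' (S^[k] z)| := by
        intro z
        have hdec : f z * g (S^[k] z) - f' z * g' (S^[k] z) =
            (f z - f' z) * g (S^[k] z) + f' z * (g (S^[k] z) - g' (S^[k] z)) := by ring
        rw [hdec]
        refine (abs_add_le _ _).trans ?_
        rw [abs_mul, abs_mul]
        refine add_le_add ?_ ?_
        · rw [mul_comm]
          exact mul_le_mul_of_nonneg_right (hCg' _) (abs_nonneg _)
        · exact mul_le_mul_of_nonneg_right (hf'b _) (abs_nonneg _)
      calc ∫ z, |f z * g (S^[k] z) - f' z * g' (S^[k] z)| ∂μ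
          ≤ ∫ z, (C * |f z - f' z| + C * |g (S^[k] z) - g' (S^[k] z)|) ∂μ := by
            refine integral_mono ((int1.sub int2).abs) ?_ hpt
            exact (intdf.const_mul C).add (intdgk.const_mul C)
        _ = C * δ1 + C * δ2 := by
            rw [integral_add (intdf.const_mul C) (intdgk.const_mul C),
              integral_const_mul, integral_const_mul, hδ2k]
    have habsf : |(∫ z, f z ∂μ) - ∫ z, f' z ∂μ| ≤ δ1 := by
      rw [← integral_sub intf intf']
      exact mwm_abs_int_le_int_abs μ _
    have habsg : |(∫ z, g z ∂μ) - ∫ z, g' z ∂μ| ≤ δ2 := by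
      rw [← integral_sub intg intg']
      exact mwm_abs_int_le_int_abs μ _
    have hintgb : |∫ z, g z ∂μ| ≤ C := mwm_abs_integral_le hCg'
    have hintf'b : |∫ z, f' z ∂μ| ≤ C := mwm_abs_integral_le hf'b
    have hP : |(∫ z, f z ∂μ) * (∫ z, g z ∂μ) - (∫ z, f' z ∂μ) * ∫ z, g' z ∂μ| ≤
        C * δ1 + C * δ2 := by
      have hdec : (∫ z, f z ∂μ) * (∫ z, g z ∂μ) - (∫ z, f' z ∂μ) * ∫ z, g' z ∂μ =
          ((∫ z, f z ∂μ) - ∫ z, f' z ∂μ) * (∫ z, g z ∂μ) +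
            (∫ z, f' z ∂μ) * ((∫ z, g z ∂μ) - ∫ z, g' z ∂μ) := by ring
      rw [hdec]
      refine (abs_add_le _ _).trans ?_
      rw [abs_mul, abs_mul]
      refine add_le_add ?_ ?_
      · exact (mul_le_mul habsf hintgb (abs_nonneg _) hδ1nn).trans
          (le_of_eq (mul_comm _ _))
      · exact mul_le_mul hintf'b habsg (abs_nonneg _) hC0
    have htri : ∀ A A' P P' : ℝ, |A - P| ≤ |A' - P'| + |A - A'| + |P - P'| := by
      intro A A' P P'
      have h6 : A - P = (A' - P') + ((A - A') - (P - P')) := by ring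
      rw [h6]
      have h7 := abs_add_le (A' - P') ((A - A') - (P - P'))
      have h8 := abs_sub (A - A') (P - P')
      linarith
    have h9 := htri (∫ z, f z * g (S^[k] z) ∂μ) (∫ z, f' z * g' (S^[k] z) ∂μ)
      ((∫ z, f z ∂μ) * ∫ z, g z ∂μ) ((∫ z, f' z ∂μ) * ∫ z, g' z ∂μ)
    have hring : 2 * C * (δ1 + δ2) = (C * δ1 + C * δ2) + (C * δ1 + C * δ2) := by ring
    linarith
  -- conclude
  have h4Cδ : 2 * C * (δ1 + δ2) ≤ ε / 2 := by
    have hδ1' : δ1 ≤ δ := le_of_lt hf'int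
    have hδ2' : δ2 ≤ δ := le_of_lt hg'int
    have hδeq : (4 * C + 1) * δ = ε / 2 := by
      rw [hδdef]; field_simp
    nlinarith [hδpos.le]
  have hev := hkey.eventually_lt_const (show (0:ℝ) < ε / 2 from half_pos hε)
  filter_upwards [hev, eventually_ge_atTop 1] with n h1 h2
  have hn0 : (0:ℝ) < (n:ℝ) := by exact_mod_cast h2
  have hnn : 0 ≤ (1 / (n : ℝ)) * ∑ k ∈ Finset.range n,
      |∫ z, f z * g (S^[k] z) ∂μ - (∫ z, f z ∂μ) * ∫ z, g z ∂μ| :=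
    mul_nonneg (by positivity) (Finset.sum_nonneg fun k _ => abs_nonneg _)
  rw [Real.norm_eq_abs, abs_of_nonneg hnn]
  calc (1 / (n : ℝ)) * ∑ k ∈ Finset.range n,
        |∫ z, f z * g (S^[k] z) ∂μ - (∫ z, f z ∂μ) * ∫ z, g z ∂μ|
      ≤ (1 / (n : ℝ)) * ∑ k ∈ Finset.range n,
        (|∫ z, f' z * g' (S^[k] z) ∂μ - (∫ z, f' z ∂μ) * ∫ z, g' z ∂μ| +
          2 * C * (δ1 + δ2)) := by
        refine mul_le_mul_of_nonneg_left (Finset.sum_le_sum fun k _ => hcomp k)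
          (by positivity)
    _ = (1 / (n : ℝ)) * ∑ k ∈ Finset.range n,
        |∫ z, f' z * g' (S^[k] z) ∂μ - (∫ z, f' z ∂μ) * ∫ z, g' z ∂μ| +
          (1 / (n : ℝ)) * ((n : ℝ) * (2 * C * (δ1 + δ2))) := by
        rw [Finset.sum_add_distrib, Finset.sum_const, Finset.card_range, nsmul_eq_mul]
        ring
    _ = (1 / (n : ℝ)) * ∑ k ∈ Finset.range n,
        |∫ z, f' z * g' (S^[k] z) ∂μ - (∫ z, f' z ∂μ) * ∫ z, g' z ∂μ| +
          2 * C * (δ1 + δ2) := by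
        rw [one_div, inv_mul_cancel_left₀ (ne_of_gt hn0)]
    _ < ε / 2 + ε / 2 := by
        have := h1
        refine add_lt_add_of_lt_of_le this h4Cδ
    _ = ε := add_halves ε
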